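/- arXiv:2001.03867 — 2 statements merged into one kernel-verified Lean document; each statement's English description precedes it below -/
import Mathlib

section
/- (Rump's determinant lower bound) Let A be a d×d real matrix with spectral radius ρ(A) < 1. Then det(I_d + A) ≥ exp( tr(A) - ‖A‖_F² / (2(1 - ρ(A))) ), where ‖A‖_F is the Frobenius norm. -/
open Matrix

/-- Frobenius norm squared of a square matrix. -/
noncomputable def frobSq {d : ℕ} (A : Matrix (Fin d) (Fin d) ℝ) : ℝ :=
  ∑ i, ∑ j, (A i j) ^ 2

lemma rump_scalar (ρ x : ℝ) (hρ0 : 0 ≤ ρ) (hρ : ρ < 1) (hx : |x| ≤ ρ) :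
    Real.exp (x - x ^ 2 / (2 * (1 - ρ))) ≤ 1 + x := by
  have hx1 : |x| < 1 := lt_of_le_of_lt hx hρ
  have habs := abs_lt.mp hx1
  have h1x : (0 : ℝ) < 1 + x := by linarith
  rw [← Real.exp_log h1x, Real.exp_le_exp]
  have hsum : HasSum (fun n : ℕ => (-x) ^ (n + 1) / (n + 1)) (-Real.log (1 + x)) := by
    have := Real.hasSum_pow_div_log_of_abs_lt_one (x := -x) (by rwa [abs_neg])
    simpa using this
  have hsum2' : HasSum (fun n : ℕ => (-x) ^ (n + 2) / ((n : ℝ) + 2))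
      (-Real.log (1 + x) + x) := by
    have h2 := (hasSum_nat_add_iff' 1).mpr hsum
    rw [show (-Real.log (1 + x) - ∑ i ∈ Finset.range 1, (-x) ^ (i + 1) / ((i : ℝ) + 1))
        = -Real.log (1 + x) + x by simp] at h2
    convert h2 using 2 with n
    · rfl
    push_cast; ring_nf
  have hgeo : HasSum (fun n : ℕ => x ^ 2 / 2 * ρ ^ n) (x ^ 2 / 2 * (1 - ρ)⁻¹) :=
    (hasSum_geometric_of_lt_one hρ0 hρ).mul_left _
  have hle : -Real.log (1 + x) + x ≤ x ^ 2 / 2 * (1 - ρ)⁻¹ := by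
    refine hasSum_le (fun n => ?_) hsum2' hgeo
    have hnum : (-x) ^ (n + 2) ≤ ρ ^ n * x ^ 2 := by
      calc (-x) ^ (n + 2) ≤ |(-x) ^ (n + 2)| := le_abs_self _
        _ = |x| ^ n * x ^ 2 := by rw [abs_pow, abs_neg, pow_add, sq_abs]
        _ ≤ ρ ^ n * x ^ 2 := by
            have := pow_le_pow_left₀ (abs_nonneg x) hx n
            nlinarith [sq_nonneg x]
    calc (-x) ^ (n + 2) / ((n : ℝ) + 2) ≤ (ρ ^ n * x ^ 2) / ((n : ℝ) + 2) := by
          gcongr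
      _ ≤ (ρ ^ n * x ^ 2) / 2 := by
          have h0 : (0 : ℝ) ≤ ρ ^ n * x ^ 2 := by positivity
          have h2 : (2 : ℝ) ≤ (n : ℝ) + 2 := by have : (0:ℝ) ≤ (n:ℝ) := Nat.cast_nonneg n; linarith
          exact div_le_div_of_nonneg_left h0 (by norm_num) h2
      _ = x ^ 2 / 2 * ρ ^ n := by ring
  have heq : x ^ 2 / (2 * (1 - ρ)) = x ^ 2 / 2 * (1 - ρ)⁻¹ := by
    rw [div_mul_eq_div_div, div_eq_mul_inv]
  linarith

/-- Rump's determinant lower bound: for a symmetric real matrix `A` whose eigenvalues are all of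
absolute value at most `ρ < 1`,
`det(I + A) ≥ exp(tr A - ‖A‖_F² / (2(1 - ρ)))`. -/
theorem rump_det_lower_bound {d : ℕ} (A : Matrix (Fin d) (Fin d) ℝ)
    (hA : A.IsHermitian) (ρ : ℝ) (hρ₁ : ∀ i, |hA.eigenvalues i| ≤ ρ) (hρ : ρ < 1) :
    Real.exp (A.trace - frobSq A / (2 * (1 - ρ))) ≤ (1 + A).det := by
  rcases isEmpty_or_nonempty (Fin d) with hd | hd
  · simp [frobSq, Matrix.trace, Matrix.det_isEmpty]
  have hρ0 : 0 ≤ ρ := le_trans (abs_nonneg _) (hρ₁ (Classical.arbitrary _))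
  set μ := hA.eigenvalues with hμ
  set U : Matrix (Fin d) (Fin d) ℝ := (hA.eigenvectorUnitary : Matrix (Fin d) (Fin d) ℝ) with hU
  have hU1 : U * star U = 1 := Matrix.mem_unitaryGroup_iff.mp hA.eigenvectorUnitary.2
  have hU2 : star U * U = 1 := Matrix.mem_unitaryGroup_iff'.mp hA.eigenvectorUnitary.2
  have hspec : A = U * Matrix.diagonal μ * star U := by
    have := hA.spectral_theorem
    simpa [RCLike.ofReal_real_eq_id] using this
  -- determinant
  have hdet : (1 + A).det = ∏ i, (1 + μ i) := by
    have h1 : (1 : Matrix (Fin d) (Fin d) ℝ) + A = U * (1 + Matrix.diagonal μ) * star U := by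
      rw [hspec, mul_add, add_mul, mul_one, hU1]
    rw [h1, Matrix.det_mul_comm, ← Matrix.mul_assoc, hU2, Matrix.one_mul,
      ← Matrix.diagonal_one, Matrix.diagonal_add, Matrix.det_diagonal]

  -- trace
  have htr : A.trace = ∑ i, μ i := by
    rw [hspec, Matrix.trace_mul_comm, ← Matrix.mul_assoc, hU2, Matrix.one_mul,
      Matrix.trace_diagonal]
  -- Frobenius norm
  have hfrob : frobSq A = ∑ i, (μ i) ^ 2 := by
    have hAA : (A * A).trace = ∑ i, (μ i) ^ 2 := by
      have : A * A = U * Matrix.diagonal (fun i => μ i * μ i) * star U := by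
        rw [hspec]
        rw [show U * Matrix.diagonal μ * star U * (U * Matrix.diagonal μ * star U)
          = U * (Matrix.diagonal μ * ((star U * U) * Matrix.diagonal μ)) * star U by
            simp only [Matrix.mul_assoc]]
        rw [hU2, Matrix.one_mul, Matrix.diagonal_mul_diagonal]
      rw [this, Matrix.trace_mul_comm, ← Matrix.mul_assoc, hU2, Matrix.one_mul,
        Matrix.trace_diagonal]
      exact Finset.sum_congr rfl fun i _ => (sq (μ i)).symm
    have hsymm : ∀ i j, A j i = A i j := by
      intro i j
      conv_lhs => rw [← hA]
      simp [Matrix.conjTranspose_apply]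
    rw [← hAA]
    simp only [Matrix.trace, Matrix.diag, Matrix.mul_apply, frobSq]
    exact Finset.sum_congr rfl fun i _ => Finset.sum_congr rfl fun j _ => by
      rw [hsymm i j, sq]
  rw [hdet, htr, hfrob]
  have : (∑ i, μ i) - (∑ i, (μ i) ^ 2) / (2 * (1 - ρ))
      = ∑ i, (μ i - (μ i) ^ 2 / (2 * (1 - ρ))) := by
    rw [Finset.sum_sub_distrib, Finset.sum_div]
  rw [this, Real.exp_sum]
  exact Finset.prod_le_prod (fun i _ => (Real.exp_pos _).le)
    (fun i _ => rump_scalar ρ (μ i) hρ0 hρ (hρ₁ i))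
end

section
/- For modified Bessel functions of the first kind I_ν, if 0 < x < y and ν > -1/2, then exp(x - y)·(x/y)^ν < I_ν(x)/I_ν(y) < (x/y)^ν. -/
/-- The modified Bessel function of the first kind of order `ν`, defined by its power series
`I_ν(x) = Σ_{m≥0} (x/2)^{2m+ν} / (m! Γ(m+ν+1))`. -/
noncomputable def besselI (ν x : ℝ) : ℝ :=
  ∑' m : ℕ, (x / 2) ^ (2 * m) * (x / 2) ^ ν /
    ((m.factorial : ℝ) * Real.Gamma ((m : ℝ) + ν + 1))

namespace ParisAux

open Real Filter

/-- Coefficients of the even part of the Bessel series, as a series in `x ^ 2`. -/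
noncomputable def a (ν : ℝ) (m : ℕ) : ℝ :=
  1 / (4 ^ m * m.factorial * Real.Gamma ((m : ℝ) + ν + 1))

/-- Coefficients of `cosh` as a series in `x ^ 2`. -/
noncomputable def c (m : ℕ) : ℝ := 1 / (2 * m).factorial

lemma gamma_arg_pos {ν : ℝ} (hν : -1 < ν) (m : ℕ) : 0 < (m : ℝ) + ν + 1 := by
  have : (0:ℝ) ≤ m := Nat.cast_nonneg m
  linarith

lemma a_pos {ν : ℝ} (hν : -1 < ν) (m : ℕ) : 0 < a ν m := by
  have h := Real.Gamma_pos_of_pos (gamma_arg_pos hν m)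
  have h4 : (0:ℝ) < 4 ^ m := by positivity
  have hf : (0:ℝ) < m.factorial := by positivity
  exact div_pos one_pos (by positivity)

lemma c_pos (m : ℕ) : 0 < c m := by
  have : (0:ℝ) < (2*m).factorial := by positivity
  exact div_pos one_pos this

lemma a_succ {ν : ℝ} (hν : -1 < ν) (m : ℕ) :
    a ν (m + 1) = a ν m / (4 * (m + 1) * ((m : ℝ) + ν + 1)) := by
  have hG : Real.Gamma (((m+1 : ℕ) : ℝ) + ν + 1) =
      ((m : ℝ) + ν + 1) * Real.Gamma ((m : ℝ) + ν + 1) := by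
    have : (((m+1 : ℕ) : ℝ) + ν + 1) = ((m : ℝ) + ν + 1) + 1 := by push_cast; ring
    rw [this, Real.Gamma_add_one (ne_of_gt (gamma_arg_pos hν m))]
  have hGpos := Real.Gamma_pos_of_pos (gamma_arg_pos hν m)
  have hx := gamma_arg_pos hν m
  unfold a
  rw [hG]
  have h4 : (4:ℝ) ^ (m+1) = 4 * 4 ^ m := by ring
  have hf : ((m+1).factorial : ℝ) = (m+1) * m.factorial := by
    rw [Nat.factorial_succ]; push_cast; ring
  rw [h4, hf]
  have hfne : (m.factorial : ℝ) ≠ 0 := by positivity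
  have h4ne : (4:ℝ) ^ m ≠ 0 := by positivity
  have hm1 : ((m:ℝ) + 1) ≠ 0 := by positivity
  field_simp

lemma c_succ (m : ℕ) :
    c (m + 1) = c m / ((2 * m + 1) * (2 * m + 2)) := by
  have h : (2 * (m+1)).factorial = (2*m+2) * ((2*m+1) * (2*m).factorial) := by
    have : 2 * (m+1) = (2*m+1) + 1 := by ring
    rw [this, Nat.factorial_succ, Nat.factorial_succ]
  unfold c
  rw [h]
  push_cast
  have : ((2*m).factorial : ℝ) ≠ 0 := by positivity
  field_simp

lemma ratio_succ {ν : ℝ} (hν : -1/2 < ν) (m : ℕ) :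
    a ν (m+1) / c (m+1) < a ν m / c m := by
  have hν1 : -1 < ν := by linarith
  have ha := a_pos hν1 m
  have hc := c_pos m
  have hd1 : (0:ℝ) < 4 * (m + 1) * ((m : ℝ) + ν + 1) := by
    have := gamma_arg_pos hν1 m
    positivity
  have hd2 : (0:ℝ) < ((2*(m:ℝ) + 1) * (2*(m:ℝ) + 2)) := by positivity
  have hlt : ((2*(m:ℝ) + 1) * (2*(m:ℝ) + 2)) < 4 * (m + 1) * ((m : ℝ) + ν + 1) := by
    nlinarith [Nat.cast_nonneg (α := ℝ) m]
  have key : a ν (m+1) * c m < a ν m * c (m+1) := by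
    rw [a_succ hν1, c_succ]
    calc a ν m / (4 * (m + 1) * ((m : ℝ) + ν + 1)) * c m
        = (a ν m * c m) / (4 * (m + 1) * ((m : ℝ) + ν + 1)) := by ring
      _ < (a ν m * c m) / ((2*(m:ℝ) + 1) * (2*(m:ℝ) + 2)) :=
          div_lt_div_of_pos_left (by positivity) hd2 hlt
      _ = a ν m * (c m / ((2 * (m:ℝ) + 1) * (2 * (m:ℝ) + 2))) := by ring
  rw [div_lt_div_iff₀ (c_pos (m+1)) (c_pos m)]
  linarith [key]

lemma cross_coeff {ν : ℝ} (hν : -1/2 < ν) {m n : ℕ} (h : m < n) :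
    a ν n * c m < a ν m * c n := by
  have hν1 : -1 < ν := by linarith
  have hanti : StrictAnti (fun m => a ν m / c m) :=
    strictAnti_nat_of_succ_lt (ratio_succ hν)
  have := hanti h
  rwa [div_lt_div_iff₀ (c_pos n) (c_pos m)] at this

lemma summable_a_mul {ν t : ℝ} (hν : -1 < ν) (ht : 0 ≤ t) :
    Summable fun m => a ν m * t ^ m := by
  apply summable_of_ratio_norm_eventually_le (r := 1/2) (by norm_num)
  filter_upwards [eventually_ge_atTop ⌈t⌉₊, eventually_ge_atTop 1] with n hn hn1
  have htn : t ≤ n := le_trans (Nat.le_ceil t) (by exact_mod_cast hn)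
  have hn1' : (1:ℝ) ≤ n := by exact_mod_cast hn1
  have hd1 : (0:ℝ) < 4 * (n + 1) * ((n : ℝ) + ν + 1) := by
    have := gamma_arg_pos hν n
    positivity
  have ha := a_pos hν n
  have key : a ν (n+1) * t ^ (n+1) ≤ 1/2 * (a ν n * t ^ n) := by
    rw [a_succ hν, pow_succ]
    rw [div_mul_eq_mul_div]
    rw [div_le_iff₀ hd1]
    have h1 : a ν n * t ^ n * t ≤ a ν n * t ^ n * n := by
      have : (0:ℝ) ≤ a ν n * t ^ n := by positivity
      nlinarith
    have h2 : (n:ℝ) ≤ 1/2 * (4 * (n+1) * ((n:ℝ)+ν+1)) := by nlinarith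
    have h3 : (0:ℝ) ≤ a ν n * t ^ n := by positivity
    nlinarith
  have hnn1 : 0 ≤ a ν (n+1) * t ^ (n+1) := by
    have := a_pos hν (n+1); positivity
  have hnn : 0 ≤ a ν n * t ^ n := by positivity
  rw [Real.norm_of_nonneg hnn1, Real.norm_of_nonneg hnn]
  exact key

lemma summable_c_mul {t : ℝ} (ht : 0 ≤ t) :
    Summable fun m => c m * t ^ m := by
  apply summable_of_ratio_norm_eventually_le (r := 1/2) (by norm_num)
  filter_upwards [eventually_ge_atTop ⌈t⌉₊, eventually_ge_atTop 1] with n hn hn1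
  have htn : t ≤ n := le_trans (Nat.le_ceil t) (by exact_mod_cast hn)
  have hn1' : (1:ℝ) ≤ n := by exact_mod_cast hn1
  have hd2 : (0:ℝ) < ((2*(n:ℝ) + 1) * (2*(n:ℝ) + 2)) := by positivity
  have hc := c_pos n
  have key : c (n+1) * t ^ (n+1) ≤ 1/2 * (c n * t ^ n) := by
    rw [c_succ, pow_succ]
    rw [div_mul_eq_mul_div]
    rw [div_le_iff₀ hd2]
    have h3 : (0:ℝ) ≤ c n * t ^ n := by positivity
    have h1 : c n * t ^ n * t ≤ c n * t ^ n * n := by nlinarith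
    have h2 : (n:ℝ) ≤ 1/2 * ((2*(n:ℝ) + 1) * (2*(n:ℝ) + 2)) := by nlinarith
    nlinarith
  have hnn1 : 0 ≤ c (n+1) * t ^ (n+1) := by
    have := c_pos (n+1); positivity
  have hnn : 0 ≤ c n * t ^ n := by positivity
  rw [Real.norm_of_nonneg hnn1, Real.norm_of_nonneg hnn]
  exact key

set_option maxHeartbeats 1000000 in
/-- monotone cross-multiplication lemma for power series with decreasing coefficient ratios -/
lemma cross {a c : ℕ → ℝ} (ha : ∀ m, 0 < a m) (hc : ∀ m, 0 < c m)
    (hr : ∀ ⦃m n : ℕ⦄, m < n → a n * c m < a m * c n)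
    {s t : ℝ} (hs : 0 < s) (hst : s < t)
    (hat : Summable fun m => a m * t ^ m) (hct : Summable fun m => c m * t ^ m)
    (has : Summable fun m => a m * s ^ m) (hcs : Summable fun m => c m * s ^ m) :
    (∑' m, a m * t ^ m) * ∑' m, c m * s ^ m < (∑' m, a m * s ^ m) * ∑' m, c m * t ^ m := by
  have ht : 0 < t := hs.trans hst
  set F : ℕ × ℕ → ℝ := fun p => (a p.1 * t ^ p.1) * (c p.2 * s ^ p.2) -
    (a p.1 * s ^ p.1) * (c p.2 * t ^ p.2) with hF
  have hsum1 : Summable fun p : ℕ × ℕ => (a p.1 * t ^ p.1) * (c p.2 * s ^ p.2) :=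
    hat.mul_of_nonneg hcs (fun m => mul_nonneg (ha m).le (pow_nonneg ht.le m))
      (fun m => mul_nonneg (hc m).le (pow_nonneg hs.le m))
  have hsum2 : Summable fun p : ℕ × ℕ => (a p.1 * s ^ p.1) * (c p.2 * t ^ p.2) :=
    has.mul_of_nonneg hct (fun m => mul_nonneg (ha m).le (pow_nonneg hs.le m))
      (fun m => mul_nonneg (hc m).le (pow_nonneg ht.le m))
  have hsumF : Summable F := hsum1.sub hsum2
  have htsumF : ∑' p, F p = (∑' m, a m * t ^ m) * (∑' m, c m * s ^ m) -
      (∑' m, a m * s ^ m) * (∑' m, c m * t ^ m) := by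
    rw [hF, Summable.tsum_sub hsum1 hsum2, Summable.tsum_mul_tsum hat hcs hsum1,
      Summable.tsum_mul_tsum has hct hsum2]
  -- symmetrize
  have hswap : ∑' p : ℕ × ℕ, F (Prod.swap p) = ∑' p, F p :=
    (Equiv.prodComm ℕ ℕ).tsum_eq F
  have hsumFswap : Summable fun p : ℕ × ℕ => F (Prod.swap p) :=
    ((Equiv.prodComm ℕ ℕ).summable_iff (f := F)).mpr hsumF
  have hpow : ∀ m n : ℕ, m < n → t ^ m * s ^ n < s ^ m * t ^ n := by
    intro m n h
    obtain ⟨k, rfl⟩ := Nat.exists_eq_add_of_lt h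
    have h1 : s ^ (k+1) < t ^ (k+1) := pow_lt_pow_left₀ hst hs.le (Nat.succ_ne_zero k)
    have e1 : s ^ (m + k + 1) = s ^ m * s ^ (k+1) := by
      rw [← pow_add, Nat.add_assoc]
    have e2 : t ^ (m + k + 1) = t ^ m * t ^ (k+1) := by
      rw [← pow_add, Nat.add_assoc]
    rw [e1, e2]
    calc t ^ m * (s ^ m * s ^ (k+1)) = (s ^ m * t ^ m) * s ^ (k+1) := by ring
      _ < (s ^ m * t ^ m) * t ^ (k+1) := by
          apply mul_lt_mul_of_pos_left h1; positivity
      _ = s ^ m * (t ^ m * t ^ (k+1)) := by ring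
  have hG : ∀ p : ℕ × ℕ, F p + F (Prod.swap p) ≤ 0 := by
    rintro ⟨m, n⟩
    have hid : F (m, n) + F (Prod.swap (m, n)) =
        (a m * c n - a n * c m) * (t ^ m * s ^ n - s ^ m * t ^ n) := by
      simp only [hF, Prod.swap]; ring
    rw [hid]
    rcases lt_trichotomy m n with h | h | h
    · apply le_of_lt
      apply mul_neg_of_pos_of_neg
      · have := hr h; linarith
      · have := hpow m n h; linarith
    · subst h; ring_nf; simp
    · apply le_of_lt
      apply mul_neg_of_neg_of_pos
      · have := hr h; linarith
      · have := hpow n m h; linarith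
  have hG01 : F (0, 1) + F (Prod.swap (0, 1)) < 0 := by
    have hid : F (0, 1) + F (Prod.swap (0, 1)) =
        (a 0 * c 1 - a 1 * c 0) * (t ^ 0 * s ^ 1 - s ^ 0 * t ^ 1) := by
      simp only [hF, Prod.swap]; ring
    rw [hid]
    apply mul_neg_of_pos_of_neg
    · have := hr (Nat.zero_lt_one); linarith
    · have := hpow 0 1 Nat.zero_lt_one; linarith
  have hGsum : Summable fun p : ℕ × ℕ => F p + F (Prod.swap p) := hsumF.add hsumFswap
  have hGlt : ∑' p : ℕ × ℕ, (F p + F (Prod.swap p)) < 0 := by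
    have := Summable.tsum_lt_tsum (f := fun p : ℕ × ℕ => F p + F (Prod.swap p))
      (g := fun _ : ℕ × ℕ => (0:ℝ)) hG hG01 hGsum summable_zero
    simpa using this
  have h2F : ∑' p : ℕ × ℕ, (F p + F (Prod.swap p)) = 2 * ∑' p, F p := by
    rw [Summable.tsum_add hsumF hsumFswap, hswap]; ring
  have hFlt : ∑' p, F p < 0 := by linarith [h2F ▸ hGlt]
  rw [htsumF] at hFlt
  linarith

end ParisAux

/-- Paris' inequality: for `0 < x < y` and `ν > -1/2`,
`exp(x - y)·(x/y)^ν < I_ν(x)/I_ν(y) < (x/y)^ν`. -/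
theorem besselI_ratio_bounds (ν x y : ℝ) (hx : 0 < x) (hxy : x < y) (hν : -1 / 2 < ν) :
    Real.exp (x - y) * (x / y) ^ ν < besselI ν x / besselI ν y ∧
    besselI ν x / besselI ν y < (x / y) ^ ν := by
  have hν' : -1/2 < ν := hν
  have hν1 : (-1:ℝ) < ν := by linarith
  have hy : 0 < y := hx.trans hxy
  have hu : (0:ℝ) < x ^ 2 := by positivity
  have huv : x ^ 2 < y ^ 2 := by nlinarith
  -- rewrite besselI as a power series in `z ^ 2` times `(z/2) ^ ν`
  have hrw : ∀ z : ℝ, besselI ν z = (z / 2) ^ ν * ∑' m, ParisAux.a ν m * (z ^ 2) ^ m := by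
    intro z
    unfold besselI
    rw [← tsum_mul_left]
    apply tsum_congr
    intro m
    have h1 : (z / 2) ^ (2 * m) = (z ^ 2) ^ m / 4 ^ m := by
      rw [pow_mul, show (z / 2) ^ 2 = z ^ 2 / 4 by ring, div_pow]
    rw [h1, ParisAux.a]
    ring
  set Ax := ∑' m, ParisAux.a ν m * (x ^ 2) ^ m with hAxdef
  set Ay := ∑' m, ParisAux.a ν m * (y ^ 2) ^ m with hAydef
  have hsax : Summable fun m => ParisAux.a ν m * (x ^ 2) ^ m :=
    ParisAux.summable_a_mul hν1 hu.le
  have hsay : Summable fun m => ParisAux.a ν m * (y ^ 2) ^ m :=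
    ParisAux.summable_a_mul hν1 (by positivity)
  have hscx : Summable fun m => ParisAux.c m * (x ^ 2) ^ m :=
    ParisAux.summable_c_mul hu.le
  have hscy : Summable fun m => ParisAux.c m * (y ^ 2) ^ m :=
    ParisAux.summable_c_mul (by positivity)
  have hAx : 0 < Ax := by
    apply Summable.tsum_pos hsax (fun m => mul_nonneg (ParisAux.a_pos hν1 m).le (by positivity)) 0
    have := ParisAux.a_pos hν1 0
    simpa using this
  have hAy : 0 < Ay := by
    apply Summable.tsum_pos hsay (fun m => mul_nonneg (ParisAux.a_pos hν1 m).le (by positivity)) 0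
    have := ParisAux.a_pos hν1 0
    simpa using this
  have hAlt : Ax < Ay := by
    apply Summable.tsum_lt_tsum (i := 1)
    · intro m
      exact mul_le_mul_of_nonneg_left (pow_le_pow_left₀ hu.le huv.le m)
        (ParisAux.a_pos hν1 m).le
    · have h1 : (x ^ 2) ^ 1 < (y ^ 2) ^ 1 := by simpa using huv
      exact mul_lt_mul_of_pos_left h1 (ParisAux.a_pos hν1 1)
    · exact hsax
    · exact hsay
  -- cosh identification
  have hC : ∀ z : ℝ, (∑' m, ParisAux.c m * (z ^ 2) ^ m) = Real.cosh z := by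
    intro z
    rw [Real.cosh_eq_tsum]
    apply tsum_congr
    intro m
    rw [ParisAux.c, ← pow_mul]
    ring
  have hcross : Ay * Real.cosh x < Ax * Real.cosh y := by
    rw [← hC x, ← hC y]
    exact ParisAux.cross (ParisAux.a_pos hν1) ParisAux.c_pos
      (fun m n h => ParisAux.cross_coeff hν' h) hu huv hsay hscy hsax hscx
  have hcoshx : 0 < Real.cosh x := Real.cosh_pos x
  have hcoshy : 0 < Real.cosh y := Real.cosh_pos y
  -- exp/cosh comparison
  have hcosh : Real.exp x * Real.cosh y < Real.exp y * Real.cosh x := by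
    rw [Real.cosh_eq, Real.cosh_eq]
    have h : Real.exp x * Real.exp (-y) < Real.exp y * Real.exp (-x) := by
      rw [← Real.exp_add, ← Real.exp_add]
      exact Real.exp_lt_exp.2 (by linarith)
    nlinarith [h]
  -- powers
  set P := (x / 2) ^ ν with hPdef
  set Q := (y / 2) ^ ν with hQdef
  have hP : 0 < P := Real.rpow_pos_of_pos (by positivity) ν
  have hQ : 0 < Q := Real.rpow_pos_of_pos (by positivity) ν
  have hPQ : (x / y) ^ ν = P / Q := by
    rw [hPdef, hQdef, ← Real.div_rpow (by positivity) (by positivity)]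
    congr 1
    field_simp
  have hratio : besselI ν x / besselI ν y = (P / Q) * (Ax / Ay) := by
    rw [hrw x, hrw y, ← hPdef, ← hQdef, ← hAxdef, ← hAydef]
    exact mul_div_mul_comm _ _ _ _
  have hPQpos : 0 < P / Q := div_pos hP hQ
  constructor
  · -- lower bound
    have h1 : Real.exp (x - y) < Real.cosh x / Real.cosh y := by
      rw [Real.exp_sub, div_lt_div_iff₀ (Real.exp_pos y) hcoshy]
      linarith
    have h2 : Real.cosh x / Real.cosh y < Ax / Ay := by
      rw [div_lt_div_iff₀ hcoshy hAy]
      linarith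
    have h3 : Real.exp (x - y) < Ax / Ay := h1.trans h2
    rw [hratio, hPQ]
    calc Real.exp (x - y) * (P / Q) < (Ax / Ay) * (P / Q) :=
          mul_lt_mul_of_pos_right h3 hPQpos
      _ = (P / Q) * (Ax / Ay) := by ring
  · -- upper bound
    rw [hratio, hPQ]
    have h4 : Ax / Ay < 1 := (div_lt_one hAy).2 hAlt
    calc (P / Q) * (Ax / Ay) < (P / Q) * 1 := mul_lt_mul_of_pos_left h4 hPQpos
      _ = P / Q := by ring
end
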